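/- Let G be a linearly ordered commutative group and X a set. Let f₁ : ι₁ → (X → G), f₂ : ι₂ → (X → G), g₁ : κ₁ → (X → G), g₂ : κ₂ → (X → G) be families indexed by finite nonempty types, with pointwise maxima F₁, F₂, G₁, G₂. Assume the pairs (f₁, f₂) and (g₁, g₂) are corner-integral (every corner root of fᵢ, resp. gᵢ, is a point where the maximum of the other family of the pair surpasses it: x ∈ Cor(f₁) ⇒ F₁(x) ≤ F₂(x), x ∈ Cor(f₂) ⇒ F₂(x) ≤ F₁(x), and similarly for g), and assume F₂ ≤ F₁ and G₂ ≤ G₁ pointwise (i.e. the represented fractions are ≥ 1). Then the pair consisting of the numerator family {f₁ᵢ · g₁ⱼ} indexed by ι₁ × κ₁ and the denominator family indexed by (ι₁ × κ₂) ⊕ (ι₂ × κ₁), sending (i, j) ↦ f₁ᵢ · g₂ⱼ and (i, j) ↦ f₂ᵢ · g₁ⱼ respectively, is corner-integral. (This is the representation of |f| ⊓ |g| = f·g/(f + g) for f = F₁/F₂ and g = G₁/G₂, so the meet of corner-integral elements is corner-integral.) -/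

import Mathlib

/-- `x` is a corner root of the family `f` if two distinct members agree at `x` and
dominate all other members there. -/
def IsCornerRoot {X A ι : Type*} [LinearOrder A] (f : ι → X → A) (x : X) : Prop :=
  ∃ i j : ι, i ≠ j ∧ f i x = f j x ∧ ∀ l : ι, f l x ≤ f i x

/-- The pointwise maximum of a finite nonempty family of functions. -/
def famSup {A X ι : Type*} [SemilatticeSup A] [Fintype ι] [Nonempty ι]
    (f : ι → X → A) (x : X) : A :=
  Finset.univ.sup' Finset.univ_nonempty fun i => f i x

lemma le_famSup {A X ι : Type*} [SemilatticeSup A] [Fintype ι] [Nonempty ι]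
    (f : ι → X → A) (x : X) (i : ι) : f i x ≤ famSup f x := by
  unfold famSup
  exact Finset.le_sup' (fun i => f i x) (Finset.mem_univ i)

lemma famSup_le {A X ι : Type*} [SemilatticeSup A] [Fintype ι] [Nonempty ι]
    (f : ι → X → A) (x : X) {a : A} (h : ∀ i, f i x ≤ a) : famSup f x ≤ a :=
  Finset.sup'_le _ _ fun i _ => h i

lemma exists_famSup_eq {A X ι : Type*} [LinearOrder A] [Fintype ι] [Nonempty ι]
    (f : ι → X → A) (x : X) : ∃ i, famSup f x = f i x := by
  obtain ⟨i, _, h⟩ := Finset.exists_mem_eq_sup' (Finset.univ_nonempty (α := ι))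
    (fun i => f i x)
  exact ⟨i, h⟩

lemma famSup_mul {A X ι κ : Type*} [CommGroup A] [LinearOrder A] [IsOrderedMonoid A]
    [Fintype ι] [Nonempty ι] [Fintype κ] [Nonempty κ]
    (f : ι → X → A) (g : κ → X → A) (x : X) :
    famSup (fun p : ι × κ => fun y => f p.1 y * g p.2 y) x =
      famSup f x * famSup g x := by
  apply le_antisymm
  · exact famSup_le _ _ fun p =>
      mul_le_mul' (le_famSup f x p.1) (le_famSup g x p.2)
  · obtain ⟨i, hi⟩ := exists_famSup_eq f x
    obtain ⟨j, hj⟩ := exists_famSup_eq g x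
    rw [hi, hj]
    exact le_famSup (fun p : ι × κ => fun y => f p.1 y * g p.2 y) x (i, j)

/-- If the fractions `F₁/F₂` and `G₁/G₂` (given by monomial families `f₁, f₂` and
`g₁, g₂`) are corner-integral and `≥ 1`, then the representation of their meet
`|f| ⊓ |g| = f·g/(f + g)`, with numerator family `{f₁ᵢ · g₁ⱼ}` and denominator family
`{f₁ᵢ · g₂ⱼ} ⊕ {f₂ᵢ · g₁ⱼ}`, is corner-integral. -/
theorem meet_of_corner_integral_is_corner_integral {A X : Type*}
    [CommGroup A] [LinearOrder A] [IsOrderedMonoid A]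
    {ι₁ ι₂ κ₁ κ₂ : Type*} [Fintype ι₁] [Nonempty ι₁] [Fintype ι₂] [Nonempty ι₂]
    [Fintype κ₁] [Nonempty κ₁] [Fintype κ₂] [Nonempty κ₂]
    (f₁ : ι₁ → X → A) (f₂ : ι₂ → X → A) (g₁ : κ₁ → X → A) (g₂ : κ₂ → X → A)
    (hf₁ : ∀ x : X, IsCornerRoot f₁ x → famSup f₁ x ≤ famSup f₂ x)
    (hf₂ : ∀ x : X, IsCornerRoot f₂ x → famSup f₂ x ≤ famSup f₁ x)
    (hg₁ : ∀ x : X, IsCornerRoot g₁ x → famSup g₁ x ≤ famSup g₂ x)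
    (hg₂ : ∀ x : X, IsCornerRoot g₂ x → famSup g₂ x ≤ famSup g₁ x)
    (hF : ∀ x : X, famSup f₂ x ≤ famSup f₁ x)
    (hG : ∀ x : X, famSup g₂ x ≤ famSup g₁ x) :
    (∀ x : X,
        IsCornerRoot (fun p : ι₁ × κ₁ => fun y => f₁ p.1 y * g₁ p.2 y) x →
        famSup (fun p : ι₁ × κ₁ => fun y => f₁ p.1 y * g₁ p.2 y) x ≤
          famSup (Sum.elim (fun p : ι₁ × κ₂ => fun y => f₁ p.1 y * g₂ p.2 y)
            (fun p : ι₂ × κ₁ => fun y => f₂ p.1 y * g₁ p.2 y)) x) ∧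
    (∀ x : X,
        IsCornerRoot (Sum.elim (fun p : ι₁ × κ₂ => fun y => f₁ p.1 y * g₂ p.2 y)
            (fun p : ι₂ × κ₁ => fun y => f₂ p.1 y * g₁ p.2 y)) x →
        famSup (Sum.elim (fun p : ι₁ × κ₂ => fun y => f₁ p.1 y * g₂ p.2 y)
            (fun p : ι₂ × κ₁ => fun y => f₂ p.1 y * g₁ p.2 y)) x ≤
          famSup (fun p : ι₁ × κ₁ => fun y => f₁ p.1 y * g₁ p.2 y) x) := by
  set N := fun p : ι₁ × κ₁ => fun y => f₁ p.1 y * g₁ p.2 y with hN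
  set D := Sum.elim (fun p : ι₁ × κ₂ => fun y => f₁ p.1 y * g₂ p.2 y)
      (fun p : ι₂ × κ₁ => fun y => f₂ p.1 y * g₁ p.2 y) with hD
  constructor
  · intro x hx
    obtain ⟨⟨i, j⟩, ⟨i', j'⟩, hne, heq, hmax⟩ := hx
    -- the corner value is the max F₁ G₁
    have hNx : famSup N x = f₁ i x * g₁ j x :=
      le_antisymm (famSup_le _ _ fun p => hmax p) (le_famSup N x (i, j))
    have hval : f₁ i x * g₁ j x = famSup f₁ x * famSup g₁ x := by
      rw [← hNx, famSup_mul]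
    have hfi : f₁ i x = famSup f₁ x := by
      by_contra h
      have h1 : f₁ i x < famSup f₁ x := lt_of_le_of_ne (le_famSup f₁ x i) h
      have : f₁ i x * g₁ j x < famSup f₁ x * famSup g₁ x :=
        mul_lt_mul_of_lt_of_le h1 (le_famSup g₁ x j)
      exact absurd hval this.ne
    have hgj : g₁ j x = famSup g₁ x := by
      have := hval
      rw [hfi] at this
      exact mul_left_cancel this
    have heq' : f₁ i x * g₁ j x = f₁ i' x * g₁ j' x := heq
    have hval' : f₁ i' x * g₁ j' x = famSup f₁ x * famSup g₁ x := heq'.symm.trans hval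
    have hfi' : f₁ i' x = famSup f₁ x := by
      by_contra h
      have h1 : f₁ i' x < famSup f₁ x := lt_of_le_of_ne (le_famSup f₁ x i') h
      have : f₁ i' x * g₁ j' x < famSup f₁ x * famSup g₁ x :=
        mul_lt_mul_of_lt_of_le h1 (le_famSup g₁ x j')
      exact absurd hval' this.ne
    have hgj' : g₁ j' x = famSup g₁ x := by
      have := hval'
      rw [hfi'] at this
      exact mul_left_cancel this
    have hNmax : famSup N x = famSup f₁ x * famSup g₁ x := by rw [famSup_mul]
    rcases ne_or_eq i i' with hii | hii
    · -- x is a corner root of f₁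
      have hcf : IsCornerRoot f₁ x :=
        ⟨i, i', hii, hfi.trans hfi'.symm, fun l => hfi ▸ le_famSup f₁ x l⟩
      have h1 : famSup f₁ x ≤ famSup f₂ x := hf₁ x hcf
      calc famSup N x = famSup f₁ x * famSup g₁ x := hNmax
        _ ≤ famSup f₂ x * famSup g₁ x := mul_le_mul_left h1 _
        _ = famSup (fun p : ι₂ × κ₁ => fun y => f₂ p.1 y * g₁ p.2 y) x :=
            (famSup_mul f₂ g₁ x).symm
        _ ≤ famSup D x := by
            obtain ⟨p, hp⟩ :=
              exists_famSup_eq (fun p : ι₂ × κ₁ => fun y => f₂ p.1 y * g₁ p.2 y) x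
            rw [hp]
            exact le_famSup D x (Sum.inr p)
    · have hjj : j ≠ j' := fun h => hne (by rw [hii, h])
      have hcg : IsCornerRoot g₁ x :=
        ⟨j, j', hjj, hgj.trans hgj'.symm, fun l => hgj ▸ le_famSup g₁ x l⟩
      have h1 : famSup g₁ x ≤ famSup g₂ x := hg₁ x hcg
      calc famSup N x = famSup f₁ x * famSup g₁ x := hNmax
        _ ≤ famSup f₁ x * famSup g₂ x := mul_le_mul_right h1 _
        _ = famSup (fun p : ι₁ × κ₂ => fun y => f₁ p.1 y * g₂ p.2 y) x :=
            (famSup_mul f₁ g₂ x).symm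
        _ ≤ famSup D x := by
            obtain ⟨p, hp⟩ :=
              exists_famSup_eq (fun p : ι₁ × κ₂ => fun y => f₁ p.1 y * g₂ p.2 y) x
            rw [hp]
            exact le_famSup D x (Sum.inl p)
  · intro x _
    have hNmax : famSup f₁ x * famSup g₁ x ≤ famSup N x := by rw [famSup_mul]
    apply famSup_le
    rintro (⟨i, j⟩ | ⟨i, j⟩)
    · calc D (Sum.inl (i, j)) x = f₁ i x * g₂ j x := rfl
        _ ≤ famSup f₁ x * famSup g₁ x :=
            mul_le_mul' (le_famSup f₁ x i) ((le_famSup g₂ x j).trans (hG x))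
        _ ≤ famSup N x := hNmax
    · calc D (Sum.inr (i, j)) x = f₂ i x * g₁ j x := rfl
        _ ≤ famSup f₁ x * famSup g₁ x :=
            mul_le_mul' ((le_famSup f₂ x i).trans (hF x)) (le_famSup g₁ x j)
        _ ≤ famSup N x := hNmax
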